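/- arXiv:1910.12789 — 2 statements merged into one kernel-verified Lean document; each statement's English description precedes it below -/
import Mathlib

section
/- Let C be an [n_c, k_c]_q MDS code with codewords c_i indexed by i = 1,…,q^{k_c}, and let {|ψ_i⟩} be an orthonormal basis of (C^q)^{⊗n_q} with n_q = k_c such that each |ψ_i⟩ is r-uniform with r < k_c ≤ n_c/2. Then |φ⟩ = q^{-k_c/2} Σ_i |c_i⟩|ψ_i⟩ is an (r+1)-uniform state of n_c + n_q qudits. -/
open scoped BigOperators

/-- A linear code `C ⊆ F^n` has minimum Hamming distance `d`. -/
def hasMinDist {n F : Type*} [Fintype n] [Field F] [DecidableEq F]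
    (C : Submodule F (n → F)) (d : ℕ) : Prop :=
  (∀ x ∈ C, x ≠ 0 → d ≤ hammingNorm x) ∧ ∃ x ∈ C, x ≠ 0 ∧ hammingNorm x = d

/-- Combine an assignment on `S` and on its complement into a full assignment. -/
def mergeOn {ι α : Type*} [DecidableEq ι] (S : Finset ι)
    (a : {i // i ∈ S} → α) (b : {i // i ∉ S} → α) : ι → α :=
  fun i => if h : i ∈ S then a ⟨i, h⟩ else b ⟨i, h⟩

/-- Reduced density matrix on the subset `S`, tracing out the complement. -/
noncomputable def reducedMatrix {ι α : Type*} [Fintype ι] [DecidableEq ι]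
    [Fintype α] [DecidableEq α] (ψ : (ι → α) → ℂ) (S : Finset ι) :
    Matrix ({i // i ∈ S} → α) ({i // i ∈ S} → α) ℂ :=
  fun x y => ∑ z : {i // i ∉ S} → α,
    ψ (mergeOn S x z) * (starRingEnd ℂ) (ψ (mergeOn S y z))

/-- `k`-uniform: every reduction to at most `k` parties is ∝ identity. -/
def kUniform {ι α : Type*} [Fintype ι] [DecidableEq ι] [Fintype α] [DecidableEq α]
    (ψ : (ι → α) → ℂ) (k : ℕ) : Prop :=
  ∀ S : Finset ι, S.card ≤ k →
    ∃ c : ℂ, reducedMatrix ψ S = c • (1 : Matrix ({i // i ∈ S} → α) ({i // i ∈ S} → α) ℂ)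

open Matrix

set_option linter.unusedSectionVars false
section helpers
variable {ι α : Type*} [Fintype ι] [DecidableEq ι] [Fintype α] [DecidableEq α]

/-- splitting a sum over all functions into merge parts -/
def mergeEquiv (S : Finset ι) : (({i // i ∈ S} → α) × ({i // i ∉ S} → α)) ≃ (ι → α) where
  toFun p := mergeOn S p.1 p.2
  invFun f := (fun i => f i.1, fun i => f i.1)
  left_inv p := by
    ext i
    · simp [mergeOn, i.2]
    · simp [mergeOn, i.2]
  right_inv f := by
    funext i
    by_cases h : i ∈ S <;> simp [mergeOn, h]

lemma sum_merge (S : Finset ι) (f : (ι → α) → ℂ) :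
    ∑ w : ι → α, f w =
      ∑ x : {i // i ∈ S} → α, ∑ z : {i // i ∉ S} → α, f (mergeOn S x z) := by
  rw [← Equiv.sum_comp (mergeEquiv (α := α) S) f, Fintype.sum_prod_type]
  rfl

/-- value of the proportionality constant from normalization -/
lemma kappa_val (S : Finset ι) (g : (ι → α) → ℂ)
    (hnorm : ∑ w : ι → α, (starRingEnd ℂ) (g w) * g w = 1)
    {κ : ℂ} (hred : reducedMatrix g S = κ • (1 : Matrix _ _ ℂ)) :
    κ = (((Fintype.card α : ℂ)) ^ S.card)⁻¹ := by
  have h1 : ∑ x : {i // i ∈ S} → α, reducedMatrix g S x x = 1 := by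
    unfold reducedMatrix
    rw [← sum_merge S (fun w => g w * (starRingEnd ℂ) (g w))]
    rw [← hnorm]
    exact Finset.sum_congr rfl fun w _ => mul_comm _ _
  rw [hred] at h1
  simp only [Matrix.smul_apply, Matrix.one_apply_eq, smul_eq_mul, mul_one,
    Finset.sum_const, Finset.card_univ, nsmul_eq_mul, Fintype.card_fun,
    Fintype.card_coe, Nat.cast_pow] at h1
  exact eq_inv_of_mul_eq_one_right h1

end helpers

lemma completeness {I γ : Type*} [Fintype I] [DecidableEq I] [Fintype γ] [DecidableEq γ]
    (hcard : Fintype.card I = Fintype.card γ)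
    (ψ : I → γ → ℂ)
    (h : ∀ c c' : I, (∑ x : γ, (starRingEnd ℂ) (ψ c x) * ψ c' x) = if c = c' then 1 else 0)
    (u v : γ) :
    (∑ c : I, ψ c u * (starRingEnd ℂ) (ψ c v)) = if u = v then 1 else 0 := by
  classical
  let g : I ≃ γ := Fintype.equivOfCardEq hcard
  let A : Matrix γ γ ℂ := fun u x => ψ (g.symm u) x
  have hA : A * Aᴴ = 1 := by
    ext a b
    simp only [Matrix.mul_apply, Matrix.conjTranspose_apply, Matrix.one_apply, A]
    have := h (g.symm b) (g.symm a)
    calc ∑ x, ψ (g.symm a) x * (starRingEnd ℂ) (ψ (g.symm b) x)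
        = ∑ x, (starRingEnd ℂ) (ψ (g.symm b) x) * ψ (g.symm a) x :=
          Finset.sum_congr rfl fun _ _ => mul_comm _ _
      _ = if g.symm b = g.symm a then 1 else 0 := this
      _ = if a = b then 1 else 0 := by
          simp [Equiv.apply_eq_iff_eq, eq_comm]
  have hA' : Aᴴ * A = 1 := mul_eq_one_comm.mp hA
  have := congrFun (congrFun hA' u) v
  simp only [Matrix.mul_apply, Matrix.conjTranspose_apply, Matrix.one_apply, A] at this
  calc ∑ c : I, ψ c u * (starRingEnd ℂ) (ψ c v)
      = ∑ w : γ, ψ (g.symm w) u * (starRingEnd ℂ) (ψ (g.symm w) v) :=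
        (Equiv.sum_comp g.symm (fun c => ψ c u * (starRingEnd ℂ) (ψ c v))).symm
    _ = (starRingEnd ℂ) (∑ w : γ, (starRingEnd ℂ) (ψ (g.symm w) u) * ψ (g.symm w) v) := by
        simp [map_sum, mul_comm]
    _ = (starRingEnd ℂ) (if u = v then 1 else 0) := by
        simp only [starRingEnd_apply]
        exact congrArg star this
    _ = if u = v then 1 else 0 := by split <;> simp

section counting
variable {F : Type*} [Field F] [Fintype F] [DecidableEq F] {nc kc : ℕ}

/-- A nonzero codeword bound: if a codeword vanishes outside `T`, its norm is ≤ #T. -/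
lemma norm_le_of_vanish (x : Fin nc → F) (T : Finset (Fin nc))
    (h : ∀ i ∉ T, x i = 0) : hammingNorm x ≤ T.card := by
  unfold hammingNorm
  apply Finset.card_le_card
  intro i hi
  simp only [Finset.mem_filter, Finset.mem_univ, true_and] at hi
  by_contra hiT
  exact hi (h i hiT)

/-- codewords agreeing on the complement of a small set are equal -/
lemma codeword_eq (C : Submodule F (Fin nc → F))
    (hMDS : (∀ x ∈ C, x ≠ 0 → nc - kc + 1 ≤ hammingNorm x))
    (T : Finset (Fin nc)) (hT : T.card ≤ nc - kc)
    (c c' : C) (hagree : ∀ i ∉ T, (c : Fin nc → F) i = (c' : Fin nc → F) i) :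
    c = c' := by
  have hmem : ((c : Fin nc → F) - (c' : Fin nc → F)) ∈ C := sub_mem c.2 c'.2
  by_cases hne : ((c : Fin nc → F) - (c' : Fin nc → F)) = 0
  · have : (c : Fin nc → F) = (c' : Fin nc → F) := by
      funext i; have := congrFun hne i; simpa [sub_eq_zero] using this
    exact Subtype.ext this
  · exfalso
    have h1 := hMDS _ hmem hne
    have h2 : hammingNorm ((c : Fin nc → F) - (c' : Fin nc → F)) ≤ T.card := by
      apply norm_le_of_vanish
      intro i hi
      simp [sub_eq_zero, hagree i hi]
    omega

/-- the projection to any ≤ kc coordinates is surjective on the code -/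
lemma proj_surj (C : Submodule F (Fin nc → F)) [DecidablePred (· ∈ C)]
    (hk : Module.finrank F C = kc)
    (hMDS : (∀ x ∈ C, x ≠ 0 → nc - kc + 1 ≤ hammingNorm x))
    (hhalf : 2 * kc ≤ nc)
    (T : Finset (Fin nc)) (hT : T.card ≤ kc)
    (v : {i // i ∈ T} → F) :
    ∃ c : C, ∀ (i : Fin nc) (h : i ∈ T), (c : Fin nc → F) i = v ⟨i, h⟩ := by
  have hkn : kc ≤ nc := by omega
  obtain ⟨T', hTT', -, hT'⟩ := Finset.exists_subsuperset_card_eq (t := Finset.univ)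
    (T.subset_univ) hT (by simpa using hkn)
  -- the projection to T' is injective hence surjective
  let π : C → ({i // i ∈ T'} → F) := fun c i => (c : Fin nc → F) i.1
  have hinj : Function.Injective π := by
    intro c c' hcc
    apply codeword_eq C hMDS T'ᶜ (by simp [Finset.card_compl, hT'])
    intro i hi
    have hi' : i ∈ T' := by simpa using hi
    exact congrFun hcc ⟨i, hi'⟩
  have hcards : Fintype.card C = Fintype.card ({i // i ∈ T'} → F) := by
    rw [Module.card_eq_pow_finrank (K := F) (V := C), hk, Fintype.card_fun, Fintype.card_coe, hT']
  have hbij : Function.Bijective π :=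
    (Fintype.bijective_iff_injective_and_card π).mpr ⟨hinj, hcards⟩
  obtain ⟨c, hc⟩ := hbij.2 (fun i => if h : i.1 ∈ T then v ⟨i.1, h⟩ else 0)
  refine ⟨c, fun i h => ?_⟩
  have := congrFun hc ⟨i, hTT' h⟩
  simpa [π, h] using this

/-- The number of codewords matching a prescription on ≤ kc coordinates is
independent of the prescription. -/
lemma count_const (C : Submodule F (Fin nc → F)) [DecidablePred (· ∈ C)]
    (hk : Module.finrank F C = kc)
    (hMDS : (∀ x ∈ C, x ≠ 0 → nc - kc + 1 ≤ hammingNorm x))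
    (hhalf : 2 * kc ≤ nc)
    (T : Finset (Fin nc)) (hT : T.card ≤ kc)
    (v v' : {i // i ∈ T} → F) :
    (∑ c : C, if (∀ (i : Fin nc) (h : i ∈ T), (c : Fin nc → F) i = v ⟨i, h⟩) then (1:ℂ) else 0)
      = ∑ c : C, if (∀ (i : Fin nc) (h : i ∈ T), (c : Fin nc → F) i = v' ⟨i, h⟩) then (1:ℂ) else 0 := by
  obtain ⟨cv, hcv⟩ := proj_surj C hk hMDS hhalf T hT v
  obtain ⟨cv', hcv'⟩ := proj_surj C hk hMDS hhalf T hT v'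
  rw [← Equiv.sum_comp (Equiv.addRight (cv' - cv)) (g := fun c : C =>
    if (∀ (i : Fin nc) (h : i ∈ T), (c : Fin nc → F) i = v' ⟨i, h⟩) then (1:ℂ) else 0)]
  apply Finset.sum_congr rfl
  intro c _
  have hiff : (∀ (i : Fin nc) (h : i ∈ T), ((Equiv.addRight (cv' - cv) c : C) : Fin nc → F) i = v' ⟨i, h⟩)
      ↔ (∀ (i : Fin nc) (h : i ∈ T), (c : Fin nc → F) i = v ⟨i, h⟩) := by
    constructor
    · intro hh i h
      have := hh i h
      simp only [Equiv.coe_addRight, Submodule.coe_add, Submodule.coe_sub, Pi.add_apply,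
        Pi.sub_apply] at this
      rw [hcv i h, hcv' i h] at this
      linear_combination this
    · intro hh i h
      simp only [Equiv.coe_addRight, Submodule.coe_add, Submodule.coe_sub, Pi.add_apply,
        Pi.sub_apply]
      rw [hh i h, hcv i h, hcv' i h]
      ring
  rw [if_congr hiff rfl rfl]

end counting
namespace ClqAux

lemma ite_and_one {P Q : Prop} [Decidable P] [Decidable Q] :
    (if P ∧ Q then (1:ℂ) else 0) = (if P then (1:ℂ) else 0) * (if Q then (1:ℂ) else 0) := by
  by_cases hP : P <;> by_cases hQ : Q <;> simp [hP, hQ]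

variable {nc kc q : ℕ}

def SL (S : Finset (Fin nc ⊕ Fin kc)) : Finset (Fin nc) :=
  Finset.univ.filter (fun i => Sum.inl i ∈ S)

def SRt (S : Finset (Fin nc ⊕ Fin kc)) : Finset (Fin kc) :=
  Finset.univ.filter (fun j => Sum.inr j ∈ S)

lemma mem_SL {S : Finset (Fin nc ⊕ Fin kc)} (i : Fin nc) : i ∈ SL S ↔ Sum.inl i ∈ S := by
  simp [SL]

lemma mem_SRt {S : Finset (Fin nc ⊕ Fin kc)} (j : Fin kc) : j ∈ SRt S ↔ Sum.inr j ∈ S := by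
  simp [SRt]

def res (S : Finset (Fin nc ⊕ Fin kc)) (x : {i // i ∈ S} → Fin q) :
    {j // j ∈ SRt S} → Fin q :=
  fun j => x ⟨Sum.inr j.1, (mem_SRt j.1).mp j.2⟩

def resZ (S : Finset (Fin nc ⊕ Fin kc)) (zr : {j : Fin kc // Sum.inr j ∉ S} → Fin q) :
    {j // j ∉ SRt S} → Fin q :=
  fun j => zr ⟨j.1, fun hh => j.2 ((mem_SRt j.1).mpr hh)⟩

def combineZ (S : Finset (Fin nc ⊕ Fin kc)) {α : Type*}
    (zl : {i : Fin nc // Sum.inl i ∉ S} → α) (zr : {j : Fin kc // Sum.inr j ∉ S} → α) :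
    {i : Fin nc ⊕ Fin kc // i ∉ S} → α
  | ⟨Sum.inl a, h⟩ => zl ⟨a, h⟩
  | ⟨Sum.inr b, h⟩ => zr ⟨b, h⟩

def combEquiv (S : Finset (Fin nc ⊕ Fin kc)) {α : Type*} :
    ({i // i ∉ S} → α) ≃ (({i : Fin nc // Sum.inl i ∉ S} → α) × ({j : Fin kc // Sum.inr j ∉ S} → α)) where
  toFun z := (fun i => z ⟨Sum.inl i.1, i.2⟩, fun j => z ⟨Sum.inr j.1, j.2⟩)
  invFun p := combineZ S p.1 p.2
  left_inv z := by
    funext i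
    rcases i with ⟨a | b, h⟩ <;> rfl
  right_inv p := rfl

lemma sum_combine (S : Finset (Fin nc ⊕ Fin kc)) {α : Type*} [Fintype α] [DecidableEq α]
    (f : ({i // i ∉ S} → α) → ℂ) :
    ∑ z : {i // i ∉ S} → α, f z
      = ∑ zl : {i : Fin nc // Sum.inl i ∉ S} → α, ∑ zr : {j : Fin kc // Sum.inr j ∉ S} → α,
          f (combineZ S zl zr) := by
  rw [← Equiv.sum_comp (combEquiv S).symm f, Fintype.sum_prod_type]
  rfl

def resZEquiv (S : Finset (Fin nc ⊕ Fin kc)) :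
    ({j : Fin kc // Sum.inr j ∉ S} → Fin q) ≃ ({j // j ∉ SRt S} → Fin q) where
  toFun := resZ S
  invFun w := fun j => w ⟨j.1, fun hh => j.2 ((mem_SRt j.1).mp hh)⟩
  left_inv zr := rfl
  right_inv w := rfl

variable {F : Type*} [Field F] [DecidableEq F]

def IndA (e : F ≃ Fin q) (C : Submodule F (Fin nc → F)) (S : Finset (Fin nc ⊕ Fin kc))
    (x : {i // i ∈ S} → Fin q) (z : {i // i ∉ S} → Fin q) (c : C) : ℂ :=
  if (∀ i : Fin nc, mergeOn S x z (Sum.inl i) = e ((c : Fin nc → F) i)) then 1 else 0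

def IndX (e : F ≃ Fin q) (C : Submodule F (Fin nc → F)) (S : Finset (Fin nc ⊕ Fin kc))
    (x : {i // i ∈ S} → Fin q) (c : C) : ℂ :=
  if (∀ (i : Fin nc) (_ : Sum.inl i ∈ S), x ⟨Sum.inl i, ‹_›⟩ = e ((c : Fin nc → F) i)) then 1 else 0

def IndJ (e : F ≃ Fin q) (C : Submodule F (Fin nc → F)) (S : Finset (Fin nc ⊕ Fin kc))
    (zl : {i : Fin nc // Sum.inl i ∉ S} → Fin q) (c : C) : ℂ :=
  if (∀ (i : Fin nc) (_ : Sum.inl i ∉ S), zl ⟨i, ‹_›⟩ = e ((c : Fin nc → F) i)) then 1 else 0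

lemma IndA_factor (e : F ≃ Fin q) (C : Submodule F (Fin nc → F)) (S : Finset (Fin nc ⊕ Fin kc))
    (x : {i // i ∈ S} → Fin q) (zl : {i : Fin nc // Sum.inl i ∉ S} → Fin q)
    (zr : {j : Fin kc // Sum.inr j ∉ S} → Fin q) (c : C) :
    IndA e C S x (combineZ S zl zr) c = IndX e C S x c * IndJ e C S zl c := by
  unfold IndA IndX IndJ
  rw [← ite_and_one]
  apply if_congr _ rfl rfl
  constructor
  · intro h
    constructor
    · intro i hi
      have := h i
      rwa [mergeOn, dif_pos hi] at this
    · intro i hi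
      have := h i
      rwa [mergeOn, dif_neg hi] at this
  · rintro ⟨h1, h2⟩ i
    by_cases hi : Sum.inl i ∈ S
    · rw [mergeOn, dif_pos hi]; exact h1 i hi
    · rw [mergeOn, dif_neg hi]; exact h2 i hi

lemma Psi_factor (S : Finset (Fin nc ⊕ Fin kc))
    (x : {i // i ∈ S} → Fin q) (zl : {i : Fin nc // Sum.inl i ∉ S} → Fin q)
    (zr : {j : Fin kc // Sum.inr j ∉ S} → Fin q) :
    (fun j => mergeOn S x (combineZ S zl zr) (Sum.inr j))
      = mergeOn (SRt S) (res S x) (resZ S zr) := by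
  funext j
  by_cases hj : Sum.inr j ∈ S
  · rw [mergeOn, dif_pos hj, mergeOn, dif_pos ((mem_SRt j).mpr hj)]
    rfl
  · rw [mergeOn, dif_neg hj, mergeOn, dif_neg (fun hh => hj ((mem_SRt j).mp hh))]
    rfl

lemma sum_IndJ (e : F ≃ Fin q) (C : Submodule F (Fin nc → F)) (S : Finset (Fin nc ⊕ Fin kc))
    [Fintype F] (c : C) :
    ∑ zl : {i : Fin nc // Sum.inl i ∉ S} → Fin q, IndJ e C S zl c = 1 := by
  have h : ∀ zl : {i : Fin nc // Sum.inl i ∉ S} → Fin q,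
      IndJ e C S zl c = if zl = (fun i => e ((c : Fin nc → F) i.1)) then 1 else 0 := by
    intro zl
    unfold IndJ
    apply if_congr _ rfl rfl
    constructor
    · intro h
      funext i
      exact h i.1 i.2
    · intro h i hi
      rw [h]
  simp [h]

lemma IndJ_idem (e : F ≃ Fin q) (C : Submodule F (Fin nc → F)) (S : Finset (Fin nc ⊕ Fin kc))
    (zl : {i : Fin nc // Sum.inl i ∉ S} → Fin q) (c : C) :
    IndJ e C S zl c * IndJ e C S zl c = IndJ e C S zl c := by
  unfold IndJ; split <;> simp


lemma key [Fintype F] (e : F ≃ Fin q) (C : Submodule F (Fin nc → F)) [DecidablePred (· ∈ C)]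
    (ψ : C → ((Fin kc → Fin q) → ℂ)) (S : Finset (Fin nc ⊕ Fin kc)) (Nc : ℂ)
    (hNc : (starRingEnd ℂ) Nc = Nc)
    (hvanish : ∀ (x y : {i // i ∈ S} → Fin q) (z : {i // i ∉ S} → Fin q) (c c' : C),
      c ≠ c' → IndA e C S x z c * IndA e C S y z c' = 0)
    (x y : {i // i ∈ S} → Fin q) :
    reducedMatrix (fun w => Nc *
        ∑ c : C, (if (∀ i : Fin nc, w (Sum.inl i) = e ((c : Fin nc → F) i)) then 1 else 0) *
          ψ c (fun j => w (Sum.inr j))) S x y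
      = Nc * Nc * ∑ c : C, IndX e C S x c * IndX e C S y c *
          reducedMatrix (ψ c) (SRt S) (res S x) (res S y) := by
  have e2 : ∀ (y' : {i // i ∈ S} → Fin q) (z : {i // i ∉ S} → Fin q),
      (starRingEnd ℂ) (Nc * ∑ c : C, IndA e C S y' z c *
          ψ c (fun j => mergeOn S y' z (Sum.inr j)))
        = Nc * ∑ c : C, IndA e C S y' z c *
            (starRingEnd ℂ) (ψ c (fun j => mergeOn S y' z (Sum.inr j))) := by
    intro y' z
    rw [_root_.map_mul, map_sum, hNc]
    congr 1
    apply Finset.sum_congr rfl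
    intro c _
    rw [_root_.map_mul]
    congr 1
    unfold IndA
    split <;> simp
  calc reducedMatrix (fun w => Nc *
        ∑ c : C, (if (∀ i : Fin nc, w (Sum.inl i) = e ((c : Fin nc → F) i)) then 1 else 0) *
          ψ c (fun j => w (Sum.inr j))) S x y
      = ∑ z : {i // i ∉ S} → Fin q,
          (Nc * ∑ c : C, IndA e C S x z c * ψ c (fun j => mergeOn S x z (Sum.inr j))) *
          (starRingEnd ℂ)
          (Nc * ∑ c : C, IndA e C S y z c * ψ c (fun j => mergeOn S y z (Sum.inr j))) := rfl
    _ = ∑ z : {i // i ∉ S} → Fin q,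
          (Nc * ∑ c : C, IndA e C S x z c * ψ c (fun j => mergeOn S x z (Sum.inr j))) *
          (Nc * ∑ c : C, IndA e C S y z c *
            (starRingEnd ℂ) (ψ c (fun j => mergeOn S y z (Sum.inr j)))) := by
        apply Finset.sum_congr rfl
        intro z _
        rw [e2]
    _ = Nc * Nc * ∑ z : {i // i ∉ S} → Fin q,
          (∑ c : C, IndA e C S x z c * ψ c (fun j => mergeOn S x z (Sum.inr j))) *
          (∑ c : C, IndA e C S y z c *
            (starRingEnd ℂ) (ψ c (fun j => mergeOn S y z (Sum.inr j)))) := by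
        rw [Finset.mul_sum]
        apply Finset.sum_congr rfl
        intro z _
        ring
    _ = Nc * Nc * ∑ z : {i // i ∉ S} → Fin q, ∑ c : C,
          (IndA e C S x z c * ψ c (fun j => mergeOn S x z (Sum.inr j))) *
          (IndA e C S y z c *
            (starRingEnd ℂ) (ψ c (fun j => mergeOn S y z (Sum.inr j)))) := by
        congr 1
        apply Finset.sum_congr rfl
        intro z _
        rw [Finset.sum_mul_sum]
        apply Finset.sum_congr rfl
        intro c _
        apply Finset.sum_eq_single c
        · intro c' _ hne
          have h0 := hvanish x y z c c' (fun h => hne h.symm)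
          calc (IndA e C S x z c * ψ c (fun j => mergeOn S x z (Sum.inr j))) *
                (IndA e C S y z c' *
                  (starRingEnd ℂ) (ψ c' (fun j => mergeOn S y z (Sum.inr j))))
              = (IndA e C S x z c * IndA e C S y z c') *
                (ψ c (fun j => mergeOn S x z (Sum.inr j)) *
                  (starRingEnd ℂ) (ψ c' (fun j => mergeOn S y z (Sum.inr j)))) := by ring
            _ = 0 := by rw [h0, zero_mul]
        · intro h
          exact absurd (Finset.mem_univ c) h
    _ = Nc * Nc * ∑ c : C, ∑ z : {i // i ∉ S} → Fin q,
          (IndA e C S x z c * ψ c (fun j => mergeOn S x z (Sum.inr j))) *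
          (IndA e C S y z c *
            (starRingEnd ℂ) (ψ c (fun j => mergeOn S y z (Sum.inr j)))) := by
        rw [Finset.sum_comm]
    _ = Nc * Nc * ∑ c : C, IndX e C S x c * IndX e C S y c *
          reducedMatrix (ψ c) (SRt S) (res S x) (res S y) := by
        congr 1
        apply Finset.sum_congr rfl
        intro c _
        rw [sum_combine S]
        calc ∑ zl : {i : Fin nc // Sum.inl i ∉ S} → Fin q,
              ∑ zr : {j : Fin kc // Sum.inr j ∉ S} → Fin q,
              (IndA e C S x (combineZ S zl zr) c *
                ψ c (fun j => mergeOn S x (combineZ S zl zr) (Sum.inr j))) *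
              (IndA e C S y (combineZ S zl zr) c *
                (starRingEnd ℂ) (ψ c (fun j => mergeOn S y (combineZ S zl zr) (Sum.inr j))))
            = ∑ zl : {i : Fin nc // Sum.inl i ∉ S} → Fin q,
                IndJ e C S zl c * (IndX e C S x c * IndX e C S y c *
                  ∑ zr : {j : Fin kc // Sum.inr j ∉ S} → Fin q,
                    ψ c (mergeOn (SRt S) (res S x) (resZ S zr)) *
                    (starRingEnd ℂ) (ψ c (mergeOn (SRt S) (res S y) (resZ S zr)))) := by
              apply Finset.sum_congr rfl
              intro zl _
              rw [Finset.mul_sum, Finset.mul_sum]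
              apply Finset.sum_congr rfl
              intro zr _
              rw [IndA_factor, IndA_factor, Psi_factor, Psi_factor]
              calc (IndX e C S x c * IndJ e C S zl c *
                      ψ c (mergeOn (SRt S) (res S x) (resZ S zr))) *
                   (IndX e C S y c * IndJ e C S zl c *
                      (starRingEnd ℂ) (ψ c (mergeOn (SRt S) (res S y) (resZ S zr))))
                  = (IndJ e C S zl c * IndJ e C S zl c) * (IndX e C S x c * IndX e C S y c *
                      (ψ c (mergeOn (SRt S) (res S x) (resZ S zr)) *
                      (starRingEnd ℂ) (ψ c (mergeOn (SRt S) (res S y) (resZ S zr))))) := by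
                    ring
                _ = IndJ e C S zl c * (IndX e C S x c * IndX e C S y c *
                      (ψ c (mergeOn (SRt S) (res S x) (resZ S zr)) *
                      (starRingEnd ℂ) (ψ c (mergeOn (SRt S) (res S y) (resZ S zr))))) := by
                    rw [IndJ_idem]
          _ = (∑ zl : {i : Fin nc // Sum.inl i ∉ S} → Fin q, IndJ e C S zl c) *
                (IndX e C S x c * IndX e C S y c *
                  ∑ zr : {j : Fin kc // Sum.inr j ∉ S} → Fin q,
                    ψ c (mergeOn (SRt S) (res S x) (resZ S zr)) *
                    (starRingEnd ℂ) (ψ c (mergeOn (SRt S) (res S y) (resZ S zr)))) := by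
              rw [Finset.sum_mul]
          _ = IndX e C S x c * IndX e C S y c *
                reducedMatrix (ψ c) (SRt S) (res S x) (res S y) := by
              rw [sum_IndJ, one_mul]
              congr 1
              exact Equiv.sum_comp (resZEquiv S) (fun w =>
                ψ c (mergeOn (SRt S) (res S x) w) *
                (starRingEnd ℂ) (ψ c (mergeOn (SRt S) (res S y) w)))

end ClqAux


/-- **Cl+Q method (Lemma 2)**: concatenating the codewords `c_i` of an
`[n_c, k_c]_q` MDS code with an orthonormal basis `{|ψ_i⟩}` of `(ℂ^q)^{⊗n_q}`
(`n_q = k_c`) whose members are all `r`-uniform, with `r < k_c ≤ n_c/2`,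
the state `|φ⟩ = q^{-k_c/2} ∑_i |c_i⟩|ψ_i⟩` is an `(r+1)`-uniform state of
`n_c + n_q` qudits. -/
theorem clq_method {F : Type*} [Field F] [Fintype F] [DecidableEq F]
    {nc kc r q : ℕ} (hq : Fintype.card F = q) (e : F ≃ Fin q)
    (C : Submodule F (Fin nc → F)) [DecidablePred (· ∈ C)]
    (hk : Module.finrank F C = kc) (hMDS : hasMinDist C (nc - kc + 1))
    (hr : r < kc) (hhalf : 2 * kc ≤ nc)
    (ψ : C → ((Fin kc → Fin q) → ℂ))
    (hortho : ∀ c c' : C,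
      (∑ x : Fin kc → Fin q, (starRingEnd ℂ) (ψ c x) * ψ c' x) = if c = c' then 1 else 0)
    (huni : ∀ c : C, kUniform (ψ c) r)
    (φ : ((Fin nc ⊕ Fin kc) → Fin q) → ℂ)
    (hφ : φ = fun x => ((Real.sqrt ((q : ℝ) ^ kc))⁻¹ : ℂ) *
      ∑ c : C, (if (∀ i : Fin nc, x (Sum.inl i) = e ((c : Fin nc → F) i)) then 1 else 0) *
        ψ c (fun i => x (Sum.inr i))) :
    kUniform φ (r + 1) := by
  subst hφ
  intro S hS
  have hmds := hMDS.1
  set Nc : ℂ := ((Real.sqrt ((q : ℝ) ^ kc))⁻¹ : ℂ) with hNdef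
  have hNc : (starRingEnd ℂ) Nc = Nc := by
    rw [hNdef]
    rw [map_inv₀, Complex.conj_ofReal]
  have hSLcard : (ClqAux.SL S).card ≤ S.card := by
    apply Finset.card_le_card_of_injOn (fun i => Sum.inl i)
    · intro i hi; exact (ClqAux.mem_SL i).mp hi
    · intro a _ b _ h; exact Sum.inl.inj h
  have hSRcard : (ClqAux.SRt S).card ≤ S.card := by
    apply Finset.card_le_card_of_injOn (fun j => Sum.inr j)
    · intro j hj; exact (ClqAux.mem_SRt j).mp hj
    · intro a _ b _ h; exact Sum.inr.inj h
  have hvanish : ∀ (x y : {i // i ∈ S} → Fin q) (z : {i // i ∉ S} → Fin q) (c c' : C),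
      c ≠ c' → ClqAux.IndA e C S x z c * ClqAux.IndA e C S y z c' = 0 := by
    intro x y z c c' hne
    unfold ClqAux.IndA
    by_cases h1 : (∀ i : Fin nc, mergeOn S x z (Sum.inl i) = e ((c : Fin nc → F) i))
    · by_cases h2 : (∀ i : Fin nc, mergeOn S y z (Sum.inl i) = e ((c' : Fin nc → F) i))
      · exfalso
        apply hne
        apply codeword_eq C hmds (ClqAux.SL S) (by omega)
        intro i hi
        have hiS : Sum.inl i ∉ S := fun hh => hi ((ClqAux.mem_SL i).mpr hh)
        have hx := h1 i
        have hy := h2 i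
        rw [mergeOn, dif_neg hiS] at hx hy
        have : e ((c : Fin nc → F) i) = e ((c' : Fin nc → F) i) := by rw [← hx, ← hy]
        exact e.injective this
      · simp [h2]
    · simp [h1]
  have hkey := ClqAux.key e C ψ S Nc hNc hvanish
  have hnorm1 : ∀ c : C, ∑ w : Fin kc → Fin q, (starRingEnd ℂ) (ψ c w) * ψ c w = 1 := by
    intro c; simpa using hortho c c
  by_cases hSRr : (ClqAux.SRt S).card ≤ r
  · -- classical part may be nonempty, quantum part has ≤ r coordinates
    set κ : ℂ := ((Fintype.card (Fin q) : ℂ) ^ (ClqAux.SRt S).card)⁻¹ with hκdef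
    have hredc : ∀ c : C, reducedMatrix (ψ c) (ClqAux.SRt S) = κ • 1 := by
      intro c
      obtain ⟨κ', hκ'⟩ := huni c (ClqAux.SRt S) hSRr
      rw [hκ', kappa_val (ClqAux.SRt S) (ψ c) (hnorm1 c) hκ']
    refine ⟨Nc * Nc * κ * ∑ c : C,
      (if (∀ (i : Fin nc) (_ : i ∈ ClqAux.SL S), (c : Fin nc → F) i = 0) then (1:ℂ) else 0), ?_⟩
    ext x y
    rw [hkey x y, Matrix.smul_apply, Matrix.one_apply, smul_eq_mul]
    by_cases hxy : x = y
    · subst hxy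
      rw [if_pos rfl, mul_one]
      have hIx2 : ∀ c : C, ClqAux.IndX e C S x c * ClqAux.IndX e C S x c *
          reducedMatrix (ψ c) (ClqAux.SRt S) (ClqAux.res S x) (ClqAux.res S x)
          = κ * ClqAux.IndX e C S x c := by
        intro c
        rw [hredc c, Matrix.smul_apply, Matrix.one_apply_eq, smul_eq_mul, mul_one]
        unfold ClqAux.IndX
        split <;> ring
      rw [Finset.sum_congr rfl (fun c _ => hIx2 c), ← Finset.mul_sum]
      have hform : ∀ c : C, ClqAux.IndX e C S x c =
          (if (∀ (i : Fin nc) (h : i ∈ ClqAux.SL S), (c : Fin nc → F) i =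
            (fun p : {i // i ∈ ClqAux.SL S} =>
              e.symm (x ⟨Sum.inl p.1, (ClqAux.mem_SL p.1).mp p.2⟩)) ⟨i, h⟩) then (1:ℂ) else 0) := by
        intro c
        unfold ClqAux.IndX
        apply if_congr _ rfl rfl
        constructor
        · intro h i hi
          show (c : Fin nc → F) i = e.symm (x ⟨Sum.inl i, (ClqAux.mem_SL i).mp hi⟩)
          rw [Equiv.eq_symm_apply]
          exact (h i ((ClqAux.mem_SL i).mp hi)).symm
        · intro h i hi
          have h2 : (c : Fin nc → F) i
              = e.symm (x ⟨Sum.inl i, (ClqAux.mem_SL i).mp ((ClqAux.mem_SL i).mpr hi)⟩) :=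
            h i ((ClqAux.mem_SL i).mpr hi)
          rw [h2, Equiv.apply_symm_apply]
      have hcc := count_const C hk hmds hhalf (ClqAux.SL S) (by omega)
        (fun p : {i // i ∈ ClqAux.SL S} =>
          e.symm (x ⟨Sum.inl p.1, (ClqAux.mem_SL p.1).mp p.2⟩)) (fun _ => (0:F))
      rw [Finset.sum_congr rfl (fun c _ => hform c), hcc]
      ring
    · rw [if_neg hxy, mul_zero]
      have hsum0 : ∑ c : C, ClqAux.IndX e C S x c * ClqAux.IndX e C S y c *
          reducedMatrix (ψ c) (ClqAux.SRt S) (ClqAux.res S x) (ClqAux.res S y) = 0 := by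
        apply Finset.sum_eq_zero
        intro c _
        by_cases hres : ClqAux.res S x = ClqAux.res S y
        · have ⟨a, ha⟩ : ∃ a, x a ≠ y a := by
            by_contra h
            push_neg at h
            exact hxy (funext h)
          rcases a with ⟨i | j, hmem⟩
          · have h0 : ClqAux.IndX e C S x c * ClqAux.IndX e C S y c = 0 := by
              unfold ClqAux.IndX
              by_cases hc1 : (∀ (i : Fin nc) (_ : Sum.inl i ∈ S),
                  x ⟨Sum.inl i, ‹_›⟩ = e ((c : Fin nc → F) i))
              · by_cases hc2 : (∀ (i : Fin nc) (_ : Sum.inl i ∈ S),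
                    y ⟨Sum.inl i, ‹_›⟩ = e ((c : Fin nc → F) i))
                · exfalso
                  apply ha
                  rw [hc1 i hmem, hc2 i hmem]
                · simp [hc2]
              · simp [hc1]
            rw [h0, zero_mul]
          · exfalso
            exact ha (congrFun hres ⟨j, (ClqAux.mem_SRt j).mpr hmem⟩)
        · rw [hredc c, Matrix.smul_apply, Matrix.one_apply_ne hres, smul_zero, mul_zero]
      rw [hsum0, mul_zero]
  · -- quantum part has exactly r+1 coordinates; classical part is empty
    have hrlt : r < (ClqAux.SRt S).card := lt_of_not_ge hSRr
    have hsumcard : (ClqAux.SL S).card + (ClqAux.SRt S).card ≤ S.card := by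
      have hsub : (ClqAux.SL S).image Sum.inl ∪ (ClqAux.SRt S).image Sum.inr ⊆ S := by
        intro a ha
        rcases Finset.mem_union.mp ha with h | h
        · obtain ⟨i, hi, rfl⟩ := Finset.mem_image.mp h
          exact (ClqAux.mem_SL i).mp hi
        · obtain ⟨j, hj, rfl⟩ := Finset.mem_image.mp h
          exact (ClqAux.mem_SRt j).mp hj
      have hdisj : Disjoint ((ClqAux.SL S).image Sum.inl) ((ClqAux.SRt S).image Sum.inr) := by
        rw [Finset.disjoint_left]
        intro a ha hb
        obtain ⟨i, _, rfl⟩ := Finset.mem_image.mp ha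
        obtain ⟨j, _, hij⟩ := Finset.mem_image.mp hb
        cases hij
      calc (ClqAux.SL S).card + (ClqAux.SRt S).card
          = ((ClqAux.SL S).image Sum.inl).card + ((ClqAux.SRt S).image Sum.inr).card := by
            rw [Finset.card_image_of_injective _ Sum.inl_injective,
              Finset.card_image_of_injective _ Sum.inr_injective]
        _ = ((ClqAux.SL S).image Sum.inl ∪ (ClqAux.SRt S).image Sum.inr).card :=
            (Finset.card_union_of_disjoint hdisj).symm
        _ ≤ S.card := Finset.card_le_card hsub
    have hSL0 : ∀ i : Fin nc, Sum.inl i ∉ S := by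
      have h0 : (ClqAux.SL S).card = 0 := by omega
      intro i hi
      have hmem : i ∈ ClqAux.SL S := (ClqAux.mem_SL i).mpr hi
      rw [Finset.card_eq_zero] at h0
      rw [h0] at hmem
      exact absurd hmem (Finset.notMem_empty i)
    have hIx1 : ∀ (x : {i // i ∈ S} → Fin q) (c : C), ClqAux.IndX e C S x c = 1 := by
      intro x c
      exact if_pos (fun i hi => absurd hi (hSL0 i))
    have hcardC : Fintype.card C = Fintype.card (Fin kc → Fin q) := by
      rw [Module.card_eq_pow_finrank (K := F) (V := C), hk, hq, Fintype.card_fun]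
      simp
    have hcomp := completeness hcardC ψ hortho
    refine ⟨Nc * Nc * (Fintype.card ({j // j ∉ ClqAux.SRt S} → Fin q) : ℂ), ?_⟩
    ext x y
    rw [hkey x y, Matrix.smul_apply, Matrix.one_apply, smul_eq_mul]
    have hresiff : (ClqAux.res S x = ClqAux.res S y) ↔ x = y := by
      constructor
      · intro h
        funext a
        rcases a with ⟨i | j, hmem⟩
        · exact absurd hmem (hSL0 i)
        · exact congrFun h ⟨j, (ClqAux.mem_SRt j).mpr hmem⟩
      · intro h; rw [h]
    calc Nc * Nc * ∑ c : C, ClqAux.IndX e C S x c * ClqAux.IndX e C S y c *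
          reducedMatrix (ψ c) (ClqAux.SRt S) (ClqAux.res S x) (ClqAux.res S y)
        = Nc * Nc * ∑ c : C,
            reducedMatrix (ψ c) (ClqAux.SRt S) (ClqAux.res S x) (ClqAux.res S y) := by
          congr 1
          apply Finset.sum_congr rfl
          intro c _
          rw [hIx1, hIx1, one_mul, one_mul]
      _ = Nc * Nc * ∑ w : {j // j ∉ ClqAux.SRt S} → Fin q, ∑ c : C,
            ψ c (mergeOn (ClqAux.SRt S) (ClqAux.res S x) w) *
            (starRingEnd ℂ) (ψ c (mergeOn (ClqAux.SRt S) (ClqAux.res S y) w)) := by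
          congr 1
          unfold reducedMatrix
          rw [Finset.sum_comm]
      _ = Nc * Nc * ∑ w : {j // j ∉ ClqAux.SRt S} → Fin q,
            (if x = y then (1:ℂ) else 0) := by
          congr 1
          apply Finset.sum_congr rfl
          intro w _
          rw [hcomp _ _]
          apply if_congr _ rfl rfl
          rw [← hresiff]
          constructor
          · intro h
            funext j
            have := congrFun h j.1
            rwa [mergeOn, dif_pos j.2, mergeOn, dif_pos j.2] at this
          · intro h; rw [h]
      _ = Nc * Nc * (Fintype.card ({j // j ∉ ClqAux.SRt S} → Fin q) : ℂ) *
            (if x = y then (1:ℂ) else 0) := by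
          rw [Finset.sum_const, Finset.card_univ, nsmul_eq_mul]
          ring
end

section
/- For q an odd prime power and the Singleton array entries a_i = 1/(1-γ^i) with γ a primitive element of GF(q), every square submatrix of the ⌈q/2⌉×⌈q/2⌉ matrix A with entries A_{r,s} = a_{r+s-1} (setting a_0 = 1) taken from the Singleton array is nonsingular; hence G = [I | A] generates an MDS code [q+1, ⌈q/2⌉]_q. -/
open Polynomial Finset in
lemma cauchy_like_det_ne_zero {F : Type*} [Field F] [DecidableEq F] {t : ℕ}
    (u v : Fin t → F) (hu : Function.Injective u) (hv : Function.Injective v)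
    (h : ∀ i j, 1 - u i * v j ≠ 0) :
    (Matrix.of fun i j => (1 - u i * v j)⁻¹).det ≠ 0 := by
  intro hdet
  obtain ⟨c, hc, hmul⟩ := (Matrix.exists_mulVec_eq_zero_iff).mpr hdet
  rcases Nat.eq_zero_or_pos t with ht | ht
  · subst ht; exact hc (funext fun i => i.elim0)
  set P : F[X] := ∑ j : Fin t, C (c j) * ∏ k ∈ univ.erase j, (1 - C (v k) * X) with hP
  have hdeg : P.natDegree ≤ t - 1 := by
    refine Polynomial.natDegree_sum_le_of_forall_le _ _ fun j _ => ?_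
    refine le_trans (Polynomial.natDegree_mul_le) ?_
    simp only [Polynomial.natDegree_C, zero_add]
    refine le_trans (Polynomial.natDegree_prod_le _ _) ?_
    refine le_trans (Finset.sum_le_card_nsmul _ _ 1 fun k _ => ?_) ?_
    · refine le_trans (Polynomial.natDegree_sub_le _ _) ?_
      simp only [Polynomial.natDegree_one, Nat.zero_le, max_le_iff, true_and]
      exact le_trans (Polynomial.natDegree_C_mul_le _ _) (by simp)
    · simp [Finset.card_erase_of_mem]
  -- evaluation of P
  have hPeval : ∀ x : F, P.eval x = ∑ j : Fin t, c j * ∏ k ∈ univ.erase j, (1 - v k * x) := by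
    intro x
    simp [hP, Polynomial.eval_finset_sum, Polynomial.eval_prod]
  -- P vanishes at each u i
  have hroot : ∀ i, P.eval (u i) = 0 := by
    intro i
    rw [hPeval]
    have hme : ∀ j : Fin t, (∏ k ∈ univ.erase j, (1 - v k * u i))
        = (1 - v j * u i)⁻¹ * ∏ k : Fin t, (1 - v k * u i) := by
      intro j
      have hne : (1 : F) - v j * u i ≠ 0 := by rw [mul_comm]; exact h i j
      rw [eq_inv_mul_iff_mul_eq₀ hne]
      exact Finset.mul_prod_erase Finset.univ (fun k => 1 - v k * u i) (Finset.mem_univ j)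
    have h0 : ∑ j : Fin t, c j * (1 - u i * v j)⁻¹ = 0 := by
      have := congrFun hmul i
      simpa [Matrix.mulVec, dotProduct, mul_comm] using this
    calc ∑ j : Fin t, c j * ∏ k ∈ univ.erase j, (1 - v k * u i)
        = (∑ j : Fin t, c j * (1 - u i * v j)⁻¹) * ∏ k : Fin t, (1 - v k * u i) := by
          rw [Finset.sum_mul]
          refine Finset.sum_congr rfl fun j _ => ?_
          rw [hme j, mul_comm (v j) (u i)]
          ring
      _ = 0 := by rw [h0, zero_mul]
  have hP0 : P = 0 :=
    Polynomial.eq_zero_of_natDegree_lt_card_of_eval_eq_zero P hu hroot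
      (by simpa using lt_of_le_of_lt hdeg (by omega))
  -- extract coefficients
  have hstep : ∀ j : Fin t, v j ≠ 0 → c j = 0 := by
    intro j hvj
    have := hPeval (v j)⁻¹
    rw [hP0] at this
    simp only [Polynomial.eval_zero] at this
    have hterm : ∀ j' ∈ univ.erase j, c j' * ∏ k ∈ univ.erase j', (1 - v k * (v j)⁻¹) = 0 := by
      intro j' hj'
      have hjmem : j ∈ univ.erase j' := by
        simp only [Finset.mem_erase, Finset.mem_univ, and_true] at hj' ⊢
        exact fun hh => hj' hh.symm
      rw [Finset.prod_eq_zero hjmem (by field_simp; simp), mul_zero]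
    rw [← Finset.sum_erase_add _ _ (Finset.mem_univ j), Finset.sum_eq_zero hterm, zero_add] at this
    have hprod : ∏ k ∈ univ.erase j, (1 - v k * (v j)⁻¹) ≠ 0 := by
      refine Finset.prod_ne_zero_iff.mpr fun k hk => ?_
      simp only [Finset.mem_erase, Finset.mem_univ, and_true] at hk
      intro hzero
      exact hk (hv ((mul_inv_eq_one₀ hvj).mp (sub_eq_zero.mp hzero).symm))
    exact (mul_eq_zero.mp this.symm).resolve_right hprod
  have hallc : ∀ j, c j = 0 := by
    intro j
    by_cases hvj : v j = 0
    · have := hPeval 0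
      rw [hP0] at this
      simp only [Polynomial.eval_zero, mul_zero, sub_zero, Finset.prod_const_one, mul_one] at this
      rw [← Finset.sum_erase_add _ _ (Finset.mem_univ j), Finset.sum_eq_zero ?_, zero_add] at this
      · exact this.symm
      · intro j' hj'
        simp only [Finset.mem_erase, Finset.mem_univ, and_true] at hj'
        refine hstep j' fun hvj' => hj' (hv (hvj'.trans hvj.symm))
    · exact hstep j hvj
  exact hc (funext hallc)

open Finset in
lemma hammingNorm_sum_elim {α β F : Type*} [Fintype α] [Fintype β] [Zero F] [DecidableEq F]
    (f : α → F) (g : β → F) :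
    hammingNorm (Sum.elim f g) = hammingNorm f + hammingNorm g := by
  classical
  simp only [hammingNorm]
  rw [← Finset.card_toLeft_add_card_toRight]
  congr 1 <;> [skip; skip] <;> refine congrArg Finset.card ?_ <;> ext x <;> simp

open Matrix in
theorem singleton_aux {F : Type*} [Field F] [Fintype F] [DecidableEq F]
    {q m : ℕ} (hq : Fintype.card F = q) (hodd : Odd q)
    (γ : F) (hγ : ∀ x : F, x ≠ 0 → ∃ j : ℕ, γ ^ j = x)
    (a : ℕ → F) (ha0 : a 0 = 1) (ha : ∀ i : ℕ, 1 ≤ i → a i = (1 - γ ^ i)⁻¹)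
    (hm : 2 * m = q + 1)
    (A : Matrix (Fin m) (Fin m) F)
    (hA : ∀ r s : Fin m,
      A r s = if (r : ℕ) = 0 ∨ (s : ℕ) = 0 then 1 else a ((r : ℕ) + (s : ℕ) - 1)) :
    (∀ (t : ℕ) (f : Fin t → Fin m) (g : Fin t → Fin m),
      Function.Injective f → Function.Injective g → (A.submatrix f g).det ≠ 0) ∧
    hasMinDist
      (LinearMap.range
        (Matrix.fromCols (1 : Matrix (Fin m) (Fin m) F) A).vecMulLinear)
      (m + 1) := by
  classical
  have hq2 : q % 2 = 1 := Nat.odd_iff.mp hodd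
  have hq1 : 1 < q := hq ▸ Fintype.one_lt_card
  -- γ ≠ 0
  have hγ0 : γ ≠ 0 := by
    rintro rfl
    have hall : ∀ x : F, x = 0 ∨ x = 1 := by
      intro x
      by_cases hx : x = 0
      · exact Or.inl hx
      · obtain ⟨j, hj⟩ := hγ x hx
        rcases j with _ | j
        · exact Or.inr (by rw [← hj, pow_zero])
        · exact absurd hj.symm (by simpa using hx)
    have hsub : (Finset.univ : Finset F) ⊆ {0, 1} := by
      intro x _
      rcases hall x with h | h <;> simp [h]
    have : Fintype.card F ≤ 2 := by
      calc Fintype.card F = Finset.univ.card := rfl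
        _ ≤ ({0, 1} : Finset F).card := Finset.card_le_card hsub
        _ ≤ 2 := Finset.card_insert_le _ _ |>.trans (by simp)
    omega
  have hq3 : 3 ≤ q := by omega
  -- order of γ is q - 1
  have horder : orderOf γ = q - 1 := by
    have hγu : ∀ x : Fˣ, x ∈ Subgroup.zpowers (Units.mk0 γ hγ0) := by
      intro x
      obtain ⟨j, hj⟩ := hγ x.val x.ne_zero
      refine ⟨(j : ℤ), ?_⟩
      ext
      simp [hj]
    have h1 : orderOf (Units.mk0 γ hγ0) = Nat.card Fˣ :=
      orderOf_eq_card_of_forall_mem_zpowers hγu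
    have h2 : orderOf ((Units.mk0 γ hγ0 : Fˣ) : F) = orderOf (Units.mk0 γ hγ0) := orderOf_units
    rw [Units.val_mk0] at h2
    rw [h2, h1, Nat.card_eq_fintype_card, Fintype.card_units, hq]
  have hpow1 : ∀ i : ℕ, 1 ≤ i → i ≤ q - 2 → γ ^ i ≠ 1 := by
    intro i h1 h2 hγi
    have := Nat.le_of_dvd (by omega) (orderOf_dvd_of_pow_eq_one hγi)
    rw [horder] at this
    omega
  have hpinj : ∀ i j : ℕ, i ≤ q - 2 → j ≤ q - 2 → γ ^ i = γ ^ j → i = j := by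
    have key : ∀ i j : ℕ, i < j → j ≤ q - 2 → γ ^ i ≠ γ ^ j := by
      intro i j hij hj heq
      apply hpow1 (j - i) (by omega) (by omega)
      have h3 : γ ^ i * γ ^ (j - i) = γ ^ i * 1 := by
        rw [mul_one, ← pow_add]
        rw [show i + (j - i) = j by omega]
        exact heq.symm
      exact mul_left_cancel₀ (pow_ne_zero i hγ0) h3
    intro i j hi hj heq
    rcases lt_trichotomy i j with h | h | h
    · exact absurd heq (key i j h hj)
    · exact h
    · exact absurd heq.symm (key j i h hi)
  have hb : ∀ r : Fin m, (r : ℕ) ≤ m - 1 := fun r => by have := r.isLt; omega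
  -- the Cauchy parameters
  set u : Fin m → F := fun r => if (r : ℕ) = 0 then 0 else γ ^ (r : ℕ) with hu
  set v : Fin m → F := fun s => if (s : ℕ) = 0 then 0 else γ ^ ((s : ℕ) - 1) with hv
  have hUinj : Function.Injective u := by
    intro r r' h
    simp only [hu] at h
    split_ifs at h with h1 h2 h2
    · exact Fin.ext (by omega)
    · exact absurd h.symm (pow_ne_zero _ hγ0)
    · exact absurd h (pow_ne_zero _ hγ0)
    · exact Fin.ext (hpinj _ _ (by have := hb r; omega) (by have := hb r'; omega) h)
  have hVinj : Function.Injective v := by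
    intro r r' h
    simp only [hv] at h
    split_ifs at h with h1 h2 h2
    · exact Fin.ext (by omega)
    · exact absurd h.symm (pow_ne_zero _ hγ0)
    · exact absurd h (pow_ne_zero _ hγ0)
    · exact Fin.ext (by
        have := hpinj _ _ (by have := hb r; omega) (by have := hb r'; omega) h
        omega)
  have hprodpow : ∀ r s : Fin m, (r : ℕ) ≠ 0 → (s : ℕ) ≠ 0 →
      u r * v s = γ ^ ((r : ℕ) + (s : ℕ) - 1) := by
    intro r s hr hs
    simp only [hu, hv, if_neg hr, if_neg hs, ← pow_add]
    congr 1
    omega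
  have hone : ∀ r s : Fin m, (1 : F) - u r * v s ≠ 0 := by
    intro r s
    by_cases hr : (r : ℕ) = 0
    · simp [hu, hr]
    by_cases hs : (s : ℕ) = 0
    · simp [hv, hs]
    rw [hprodpow r s hr hs]
    refine sub_ne_zero.mpr (Ne.symm ?_)
    exact hpow1 _ (by omega) (by have := hb r; have := hb s; omega)
  have hAuv : ∀ r s : Fin m, A r s = (1 - u r * v s)⁻¹ := by
    intro r s
    rw [hA]
    by_cases hr : (r : ℕ) = 0
    · simp [hu, hr]
    by_cases hs : (s : ℕ) = 0
    · simp [hv, hs]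
    rw [if_neg (by tauto), ha _ (by omega), hprodpow r s hr hs]
  -- Part 1
  have part1 : ∀ (t : ℕ) (f : Fin t → Fin m) (g : Fin t → Fin m),
      Function.Injective f → Function.Injective g → (A.submatrix f g).det ≠ 0 := by
    intro t f g hf hg
    have hsub : A.submatrix f g = Matrix.of fun i j => (1 - (u ∘ f) i * (v ∘ g) j)⁻¹ := by
      ext i j
      exact hAuv _ _
    rw [hsub]
    exact cauchy_like_det_ne_zero (u ∘ f) (v ∘ g) (hUinj.comp hf) (hVinj.comp hg)
      (fun i j => hone _ _)
  refine ⟨part1, ?_, ?_⟩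
  · -- lower bound on weight
    intro x hx hx0
    obtain ⟨c, rfl⟩ := hx
    have hc0 : c ≠ 0 := by rintro rfl; exact hx0 (map_zero _)
    rw [Matrix.vecMulLinear_apply, Matrix.vecMul_fromCols, Matrix.vecMul_one] at hx0 ⊢
    set S : Finset (Fin m) := {i | c i ≠ 0} with hS
    set T : Finset (Fin m) := {j | Matrix.vecMul c A j = 0} with hT
    have hScard : 0 < S.card := by
      obtain ⟨i, hi⟩ := Function.ne_iff.mp hc0
      exact Finset.card_pos.mpr ⟨i, by simp only [hS, Finset.mem_filter, Finset.mem_univ, true_and]; simpa using hi⟩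
    have hTS : T.card < S.card := by
      by_contra hle
      push_neg at hle
      obtain ⟨T', hT'sub, hT'card⟩ := Finset.exists_subset_card_eq hle
      set w := S.card with hw
      let f : Fin w → Fin m := fun i => ((S.orderIsoOfFin rfl) i : Fin m)
      let g : Fin w → Fin m := fun j => ((T'.orderIsoOfFin hT'card) j : Fin m)
      have hfinj : Function.Injective f := fun i j hij =>
        (S.orderIsoOfFin rfl).injective (Subtype.ext hij)
      have hginj : Function.Injective g := fun i j hij =>
        (T'.orderIsoOfFin hT'card).injective (Subtype.ext hij)
      have hfS : ∀ i, f i ∈ S := fun i => ((S.orderIsoOfFin rfl) i).2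
      have hgT : ∀ j, g j ∈ T := fun j => hT'sub ((T'.orderIsoOfFin hT'card) j).2
      refine part1 w f g hfinj hginj (Matrix.exists_vecMul_eq_zero_iff.mp ⟨c ∘ f, ?_, ?_⟩)
      · intro hzero
        have : c (f ⟨0, hScard⟩) = 0 := congrFun hzero ⟨0, hScard⟩
        have hmem := hfS ⟨0, hScard⟩
        rw [hS, Finset.mem_filter] at hmem
        exact hmem.2 this
      · funext j
        have hsum : ∑ i : Fin w, c (f i) * A (f i) (g j) = ∑ i ∈ S, c i * A i (g j) := by
          rw [← Finset.sum_attach S (fun i => c i * A i (g j))]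
          exact Fintype.sum_equiv (S.orderIsoOfFin rfl).toEquiv _ _ (fun i => rfl)
        have hfull : ∑ i ∈ S, c i * A i (g j) = ∑ i : Fin m, c i * A i (g j) := by
          refine Finset.sum_subset (Finset.subset_univ S) ?_
          intro i _ hiS
          rw [hS, Finset.mem_filter] at hiS
          push_neg at hiS
          rw [hiS (Finset.mem_univ i), zero_mul]
        have hgj : (c ᵥ* A) (g j) = 0 := by
          have := hgT j
          rw [hT, Finset.mem_filter] at this
          exact this.2
        simp only [Matrix.vecMul, dotProduct, Matrix.submatrix_apply,
          Function.comp_apply, Pi.zero_apply]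
        rw [hsum, hfull]
        simpa [Matrix.vecMul, dotProduct] using hgj
    -- counting
    rw [hammingNorm_sum_elim]
    have hcnt : T.card + hammingNorm (c ᵥ* A) = m := by
      have := Finset.card_filter_add_card_filter_not
        (s := (Finset.univ : Finset (Fin m))) (p := fun j => (c ᵥ* A) j = 0)
      simp only [Finset.card_univ, Fintype.card_fin] at this
      have hnorm2 : hammingNorm (c ᵥ* A) =
          (Finset.filter (fun j => ¬ (c ᵥ* A) j = 0) Finset.univ).card := by
        simp only [hammingNorm]
      rw [hT, hnorm2]
      exact this
    have hnormc : hammingNorm c = S.card := rfl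
    have hTm : T.card ≤ m := le_trans (Finset.card_le_card (Finset.filter_subset _ _))
      (by simp)
    omega
  · -- existence of a weight (m+1) codeword
    have hm0 : 0 < m := by omega
    let i0 : Fin m := ⟨0, hm0⟩
    have c0 : Fin m → F := Pi.single i0 1
    refine ⟨Sum.elim (Pi.single i0 1) (fun _ => 1), ⟨Pi.single i0 1, ?_⟩, ?_, ?_⟩
    · rw [Matrix.vecMulLinear_apply, Matrix.vecMul_fromCols, Matrix.vecMul_one]
      have h2 : (Pi.single i0 (1:F)) ᵥ* A = fun _ => (1:F) := by
        funext j
        have h1 : (Pi.single i0 (1:F) ᵥ* A) j = A i0 j := by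
          simp [Matrix.vecMul, dotProduct, Pi.single_apply, Finset.sum_ite_eq]
        rw [h1, hA]
        simp [i0]
      rw [h2]
    · intro h0
      have := congrFun h0 (Sum.inr i0)
      simp at this
    · rw [hammingNorm_sum_elim]
      have h1 : hammingNorm (Pi.single i0 (1:F) : Fin m → F) = 1 := by
        simp only [hammingNorm]
        rw [show (Finset.filter (fun i => (Pi.single i0 (1:F) : Fin m → F) i ≠ 0) Finset.univ)
            = {i0} by ext i; by_cases h : i = i0 <;> simp [h, Pi.single_apply]]
        simp
      have h2 : hammingNorm (fun _ : Fin m => (1:F)) = m := by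
        simp only [hammingNorm]
        simp
      rw [h1, h2]
      omega

/-- **Singleton-array construction**: for `q` an odd prime power and `γ` a
primitive element of `GF(q)`, with `a_i = (1-γ^i)⁻¹` (and border entries `1`),
every square submatrix of the `⌈q/2⌉ × ⌈q/2⌉` matrix `A` taken from the
Singleton array is nonsingular; hence `G = [I | A]` generates an MDS code
`[q+1, ⌈q/2⌉]_q`.  (Here `⌈q/2⌉ = (q+1)/2`.) -/
theorem singleton_array_MDS {F : Type*} [Field F] [Fintype F] [DecidableEq F]
    {q : ℕ} (hq : Fintype.card F = q) (hodd : Odd q)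
    (γ : F) (hγ : ∀ x : F, x ≠ 0 → ∃ j : ℕ, γ ^ j = x)
    (a : ℕ → F) (ha0 : a 0 = 1) (ha : ∀ i : ℕ, 1 ≤ i → a i = (1 - γ ^ i)⁻¹)
    (A : Matrix (Fin ((q + 1) / 2)) (Fin ((q + 1) / 2)) F)
    (hA : ∀ r s : Fin ((q + 1) / 2),
      A r s = if (r : ℕ) = 0 ∨ (s : ℕ) = 0 then 1 else a ((r : ℕ) + (s : ℕ) - 1)) :
    (∀ (t : ℕ) (f : Fin t → Fin ((q + 1) / 2)) (g : Fin t → Fin ((q + 1) / 2)),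
      Function.Injective f → Function.Injective g → (A.submatrix f g).det ≠ 0) ∧
    hasMinDist
      (LinearMap.range
        (Matrix.fromCols (1 : Matrix (Fin ((q + 1) / 2)) (Fin ((q + 1) / 2)) F) A).vecMulLinear)
      ((q + 1) / 2 + 1) := by
  have hq2 : q % 2 = 1 := Nat.odd_iff.mp hodd
  exact singleton_aux hq hodd γ hγ a ha0 ha (by omega) A hA
end
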